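/- Let m, n ≥ 2 and let G be the ordered graph on vertices v_1, ..., v_{m+n} whose only edges are the two nested edges v_1 v_{m+n} and v_m v_{m+1}. Then R(G) = 2m + 2n - 2. -/

import Mathlib

/-- A `t`-edge-coloring `c` of the complete graph on the ordered vertex set `Fin N`
contains a monochromatic ordered copy of the ordered graph `G` on `Fin M`. -/
def HasMonoCopy {M N t : ℕ} (G : SimpleGraph (Fin M)) (c : Fin N → Fin N → Fin t) : Prop :=
  ∃ k : Fin t, ∃ f : Fin M → Fin N, StrictMono f ∧
    ∀ u v : Fin M, u < v → G.Adj u v → c (f u) (f v) = k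

/-- The `t`-color ordered Ramsey number of the ordered graph `G`: the least `N` such that
every `t`-coloring of the edges of the complete graph on `Fin N` contains a monochromatic
ordered copy of `G`. -/
noncomputable def orderedRamsey {M : ℕ} (t : ℕ) (G : SimpleGraph (Fin M)) : ℕ :=
  sInf {N : ℕ | ∀ c : Fin N → Fin N → Fin t, HasMonoCopy G c}

/-- An interval coloring of an ordered graph with `k` parts, encoded as a monotone
surjection onto `Fin k` whose fibers (the parts, which are intervals of consecutive
vertices) are independent sets. -/
def IsIntervalColoring {N k : ℕ} (G : SimpleGraph (Fin N)) (p : Fin N → Fin k) : Prop :=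
  Monotone p ∧ Function.Surjective p ∧ ∀ u v : Fin N, G.Adj u v → p u ≠ p v

/-- The interval chromatic number of an ordered graph. -/
noncomputable def intervalChromatic {N : ℕ} (G : SimpleGraph (Fin N)) : ℕ :=
  sInf {k : ℕ | ∃ p : Fin N → Fin k, IsIntervalColoring G p}

/-- If `G` is the ordered graph on `v_1,…,v_{m+n}` whose only edges are the nested
edges `v_1 v_{m+n}` and `v_m v_{m+1}`, then `R(G) = 2m + 2n - 2`. -/
private lemma fin_gap {M N : ℕ} {f : Fin M → Fin N} (hf : StrictMono f) :
    ∀ d : ℕ, ∀ i j : Fin M, i.val + d = j.val → (f i).val + d ≤ (f j).val := by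
  intro d
  induction d with
  | zero =>
    intro i j h
    have : i = j := Fin.ext (by omega)
    subst this; omega
  | succ d ih =>
    intro i j h
    have hjM : j.val - 1 < M := by omega
    have h1 : (f i).val + d ≤ (f ⟨j.val - 1, hjM⟩).val := ih i _ (by simp; omega)
    have h2 : f ⟨j.val - 1, hjM⟩ < f j := hf (by rw [Fin.lt_def]; simp; omega)
    have := Fin.lt_def.mp h2
    omega

private lemma ceq {N t : ℕ} (c : Fin N → Fin N → Fin t) {a b a' b' : Fin N}
    (ha : a.val = a'.val) (hb : b.val = b'.val) : c a b = c a' b' := by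
  rw [show a = a' from Fin.ext ha, show b = b' from Fin.ext hb]

set_option maxHeartbeats 1000000 in
private lemma hedge {m n : ℕ} (hm : 1 < m) (hn : 1 < n) :
    ∀ u v : Fin (m+n), u < v →
      ((SimpleGraph.fromEdgeSet
      {s((⟨0, by omega⟩ : Fin (m + n)), (⟨m + n - 1, by omega⟩ : Fin (m + n))),
       s((⟨m - 1, by omega⟩ : Fin (m + n)), (⟨m, by omega⟩ : Fin (m + n)))}).Adj u v ↔
      ((u.val = 0 ∧ v.val = m+n-1) ∨ (u.val = m-1 ∧ v.val = m))) := by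
  intro u v huv
  have huv' := Fin.lt_def.mp huv
  rw [SimpleGraph.fromEdgeSet_adj]
  simp only [Set.mem_insert_iff, Set.mem_singleton_iff, Sym2.eq_iff, Fin.ext_iff, ne_eq]
  constructor
  · intro h; omega
  · intro h; omega

set_option maxHeartbeats 1000000 in
private lemma upper {m n : ℕ} (hm : 1 < m) (hn : 1 < n) :
    (2*m+2*n-2) ∈
      {N : ℕ | ∀ c : Fin N → Fin N → Fin 2,
        HasMonoCopy (SimpleGraph.fromEdgeSet
      {s((⟨0, by omega⟩ : Fin (m + n)), (⟨m + n - 1, by omega⟩ : Fin (m + n))),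
       s((⟨m - 1, by omega⟩ : Fin (m + n)), (⟨m, by omega⟩ : Fin (m + n)))}) c} := by
  intro c
  by_cases h12 : c ⟨2*m-2, by omega⟩ ⟨2*m-1, by omega⟩ = c ⟨m-1, by omega⟩ ⟨2*m+n-2, by omega⟩
  · -- interval copy: f i = m-1+i
    refine ⟨c ⟨2*m-2, by omega⟩ ⟨2*m-1, by omega⟩, fun i => ⟨m-1+i.val, by omega⟩, ?_, ?_⟩
    · intro a b hab
      rw [Fin.lt_def]
      have := Fin.lt_def.mp hab
      simp; omega
    · intro u v huv hadj
      have hor := (hedge hm hn u v huv).mp hadj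
      clear hadj
      rcases hor with ⟨h1, h2⟩ | ⟨h1, h2⟩
      · calc c ⟨m-1+u.val, by omega⟩ ⟨m-1+v.val, by omega⟩
            = c ⟨m-1, by omega⟩ ⟨2*m+n-2, by omega⟩ :=
              ceq c (by simp only [Fin.val_mk]; omega) (by simp only [Fin.val_mk]; omega)
          _ = _ := h12.symm
      · calc c ⟨m-1+u.val, by omega⟩ ⟨m-1+v.val, by omega⟩
            = c ⟨2*m-2, by omega⟩ ⟨2*m-1, by omega⟩ :=
              ceq c (by simp only [Fin.val_mk]; omega) (by simp only [Fin.val_mk]; omega)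
          _ = _ := rfl
  · have hcase : c ⟨2*m-2, by omega⟩ ⟨2*m-1, by omega⟩ = c ⟨0, by omega⟩ ⟨2*m+2*n-3, by omega⟩
        ∨ c ⟨m-1, by omega⟩ ⟨2*m+n-2, by omega⟩ = c ⟨0, by omega⟩ ⟨2*m+2*n-3, by omega⟩ := by
      omega
    rcases hcase with hk | hk
    · -- copy with f i = 2i (i < m) or 2i-1 (i ≥ m)
      refine ⟨c ⟨0, by omega⟩ ⟨2*m+2*n-3, by omega⟩,
        fun i => ⟨if i.val < m then 2*i.val else 2*i.val - 1, by split_ifs <;> omega⟩, ?_, ?_⟩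
      · intro a b hab
        rw [Fin.lt_def]
        have := Fin.lt_def.mp hab
        simp only [Fin.val_mk]
        split_ifs <;> omega
      · intro u v huv hadj
        have hor := (hedge hm hn u v huv).mp hadj
        clear hadj
        rcases hor with ⟨h1, h2⟩ | ⟨h1, h2⟩
        · calc c ⟨if u.val < m then 2*u.val else 2*u.val-1, by split_ifs <;> omega⟩
                ⟨if v.val < m then 2*v.val else 2*v.val-1, by split_ifs <;> omega⟩
              = c ⟨0, by omega⟩ ⟨2*m+2*n-3, by omega⟩ :=
                ceq c (by simp only [Fin.val_mk]; split_ifs <;> omega)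
                      (by simp only [Fin.val_mk]; split_ifs <;> omega)
            _ = _ := rfl
        · calc c ⟨if u.val < m then 2*u.val else 2*u.val-1, by split_ifs <;> omega⟩
                ⟨if v.val < m then 2*v.val else 2*v.val-1, by split_ifs <;> omega⟩
              = c ⟨2*m-2, by omega⟩ ⟨2*m-1, by omega⟩ :=
                ceq c (by simp only [Fin.val_mk]; split_ifs <;> omega)
                      (by simp only [Fin.val_mk]; split_ifs <;> omega)
            _ = _ := hk
    · -- copy with f i = i (i < m) or i+m+n-2 (i ≥ m)
      refine ⟨c ⟨0, by omega⟩ ⟨2*m+2*n-3, by omega⟩,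
        fun i => ⟨if i.val < m then i.val else i.val + m + n - 2, by split_ifs <;> omega⟩, ?_, ?_⟩
      · intro a b hab
        rw [Fin.lt_def]
        have := Fin.lt_def.mp hab
        simp only [Fin.val_mk]
        split_ifs <;> omega
      · intro u v huv hadj
        have hor := (hedge hm hn u v huv).mp hadj
        clear hadj
        rcases hor with ⟨h1, h2⟩ | ⟨h1, h2⟩
        · calc c ⟨if u.val < m then u.val else u.val+m+n-2, by split_ifs <;> omega⟩
                ⟨if v.val < m then v.val else v.val+m+n-2, by split_ifs <;> omega⟩
              = c ⟨0, by omega⟩ ⟨2*m+2*n-3, by omega⟩ :=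
                ceq c (by simp only [Fin.val_mk]; split_ifs <;> omega)
                      (by simp only [Fin.val_mk]; split_ifs <;> omega)
            _ = _ := rfl
        · calc c ⟨if u.val < m then u.val else u.val+m+n-2, by split_ifs <;> omega⟩
                ⟨if v.val < m then v.val else v.val+m+n-2, by split_ifs <;> omega⟩
              = c ⟨m-1, by omega⟩ ⟨2*m+n-2, by omega⟩ :=
                ceq c (by simp only [Fin.val_mk]; split_ifs <;> omega)
                      (by simp only [Fin.val_mk]; split_ifs <;> omega)
            _ = _ := hk

set_option maxHeartbeats 1000000 in
private lemma lower {m n : ℕ} (hm : 1 < m) (hn : 1 < n) : ∀ N : ℕ, N < 2*m+2*n-2 →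
    ¬ (∀ c : Fin N → Fin N → Fin 2,
      HasMonoCopy (SimpleGraph.fromEdgeSet
      {s((⟨0, by omega⟩ : Fin (m + n)), (⟨m + n - 1, by omega⟩ : Fin (m + n))),
       s((⟨m - 1, by omega⟩ : Fin (m + n)), (⟨m, by omega⟩ : Fin (m + n)))}) c) := by
  intro N hNlt hall
  obtain ⟨k, f, hf, hcol⟩ :=
    hall (fun u v => if u.val + (m+n-1) ≤ v.val then 0 else 1)
  have hlt1 : (⟨0, by omega⟩ : Fin (m+n)) < ⟨m+n-1, by omega⟩ := by
    rw [Fin.lt_def]; simp; omega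
  have hlt2 : (⟨m-1, by omega⟩ : Fin (m+n)) < ⟨m, by omega⟩ := by
    rw [Fin.lt_def]; simp; omega
  have h1 := hcol ⟨0, by omega⟩ ⟨m+n-1, by omega⟩ hlt1
    ((hedge hm hn _ _ hlt1).mpr (Or.inl ⟨by simp, by simp⟩))
  have h2 := hcol ⟨m-1, by omega⟩ ⟨m, by omega⟩ hlt2
    ((hedge hm hn _ _ hlt2).mpr (Or.inr ⟨by simp, by simp⟩))
  simp only at h1 h2
  have g1 := fin_gap hf (m+n-1) ⟨0, by omega⟩ ⟨m+n-1, by omega⟩ (by simp)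
  have g2 := fin_gap hf (m-1) ⟨0, by omega⟩ ⟨m-1, by omega⟩ (by simp)
  have g3 := fin_gap hf (n-1) ⟨m, by omega⟩ ⟨m+n-1, by omega⟩ (by simp; omega)
  rw [if_pos g1] at h1
  by_cases hc : (f ⟨m-1, by omega⟩).val + (m+n-1) ≤ (f ⟨m, by omega⟩).val
  · have hd := (f ⟨m+n-1, by omega⟩).isLt
    omega
  · rw [if_neg hc] at h2
    have : (1 : Fin 2) = (0 : Fin 2) := h2.trans h1.symm
    exact absurd this (by decide)

theorem stmt3 {m n : ℕ} (hm : 2 ≤ m) (hn : 2 ≤ n)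
    (G : SimpleGraph (Fin (m + n)))
    (hG : G = SimpleGraph.fromEdgeSet
      {s((⟨0, by omega⟩ : Fin (m + n)), (⟨m + n - 1, by omega⟩ : Fin (m + n))),
       s((⟨m - 1, by omega⟩ : Fin (m + n)), (⟨m, by omega⟩ : Fin (m + n)))}) :
    orderedRamsey 2 G = 2 * m + 2 * n - 2 := by
  subst hG
  unfold orderedRamsey
  apply le_antisymm
  · exact Nat.sInf_le (upper hm hn)
  · by_contra h
    push_neg at h
    exact lower hm hn _ h (Nat.sInf_mem ⟨_, upper hm hn⟩)
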